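/- For each u ∈ 𝒮: (i) u_i = sup_{w ∈ ℳᵐ ∪ 𝒦} (μ_u(w) + w_i) for all i ∈ S; (ii) μ_u restricted to ℳᵐ ∪ 𝒦 is the maximal map with this property: any ν : ℳᵐ ∪ 𝒦 → ℝ ∪ {−∞} with u_i = sup_{w ∈ ℳᵐ ∪ 𝒦} (ν(w) + w_i) for all i satisfies ν(w) ≤ μ_u(w) for all w ∈ ℳᵐ ∪ 𝒦; (iii) any such ν satisfies sup_{w ∈ ℳᵐ ∪ 𝒦} ν(w) < +∞; (iv) conversely, for any ν : ℳᵐ ∪ 𝒦 → ℝ ∪ {−∞} with sup_{w ∈ ℳᵐ ∪ 𝒦} ν(w) < +∞, the vector u defined by u_i = sup_{w ∈ ℳᵐ ∪ 𝒦} (ν(w) + w_i) belongs to 𝒮. -/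

import Mathlib

open Filter Topology

noncomputable section

namespace MaxPlus

variable {S : Type*}

/-- Weight of the path `p 0, p 1, ..., p n` for the kernel `A`. -/
def pathWeight (A : S → S → EReal) (p : ℕ → S) (n : ℕ) : EReal :=
  ∑ k ∈ Finset.range n, A (p k) (p (k + 1))

/-- The max-plus star kernel `A*`: supremum of weights of paths of length `≥ 0`. -/
def star (A : S → S → EReal) (i j : S) : EReal :=
  ⨆ (n : ℕ) (p : ℕ → S) (_ : p 0 = i ∧ p n = j), pathWeight A p n

/-- The max-plus kernel `A⁺`: supremum of weights of paths of length `≥ 1`. -/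
def plus (A : S → S → EReal) (i j : S) : EReal :=
  ⨆ (n : ℕ) (_ : 1 ≤ n) (p : ℕ → S) (_ : p 0 = i ∧ p n = j), pathWeight A p n

/-- `π` is a left super-harmonic row vector (with full support, being real valued). -/
def LeftSuperharmonic (A : S → S → EReal) (π : S → ℝ) : Prop :=
  ∀ j, (⨆ i, ((π i : EReal) + A i j)) ≤ (π j : EReal)

/-- The Martin kernel `K_{ij} = A*_{ij} - π_j`. -/
def K (A : S → S → EReal) (π : S → ℝ) (i j : S) : EReal :=
  star A i j - (π j : EReal)

/-- `K♭_{ij} = A⁺_{ij} - π_j`. -/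
def Kflat (A : S → S → EReal) (π : S → ℝ) (i j : S) : EReal :=
  plus A i j - (π j : EReal)

/-- The set `𝒦` of columns of the Martin kernel. -/
def kerCols (A : S → S → EReal) (π : S → ℝ) : Set (S → EReal) :=
  Set.range fun j => fun i => K A π i j

/-- The Martin space `ℳ`: closure of `𝒦` in the product topology. -/
def martin (A : S → S → EReal) (π : S → ℝ) : Set (S → EReal) :=
  closure (kerCols A π)

/-- `μ_u(w)`: the limsup of `π_j + u_j` as `K_{·j} → w`. -/
def mu (A : S → S → EReal) (π : S → ℝ) (u : S → EReal) (w : S → EReal) : EReal :=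
  ⨅ (W : Set (S → EReal)) (_ : W ∈ 𝓝 w),
    ⨆ (j : S) (_ : (fun i => K A π i j) ∈ W), ((π j : EReal) + u j)

/-- `w♭_i`: the liminf of `K♭_{ij}` as `K_{·j} → w`. -/
def flat (A : S → S → EReal) (π : S → ℝ) (w : S → EReal) (i : S) : EReal :=
  ⨆ (W : Set (S → EReal)) (_ : W ∈ 𝓝 w),
    ⨅ (j : S) (_ : (fun i' => K A π i' j) ∈ W), Kflat A π i j

/-- The kernel `H(z,w) = μ_w(z)`. -/
def H (A : S → S → EReal) (π : S → ℝ) (z w : S → EReal) : EReal := mu A π w z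

/-- The kernel `H♭(z,w) = μ_{w♭}(z)`. -/
def Hflat (A : S → S → EReal) (π : S → ℝ) (z w : S → EReal) : EReal :=
  mu A π (flat A π w) z

/-- The minimal Martin space `ℳᵐ = {w ∈ ℳ : H♭(w,w) = 0}`. -/
def martinMin (A : S → S → EReal) (π : S → ℝ) : Set (S → EReal) :=
  {w | w ∈ martin A π ∧ Hflat A π w w = 0}

/-- The maximal circuit mean `ρ(A)`. -/
def maxCircuitMean (A : S → S → EReal) : EReal :=
  ⨆ (k : ℕ) (_ : 1 ≤ k) (p : ℕ → S) (_ : p k = p 0),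
    (((k : ℝ)⁻¹ : ℝ) : EReal) * pathWeight A p k

/-- `α`-almost-geodesic with respect to the left super-harmonic vector `π`. -/
def IsAlmostGeodesic (A : S → S → EReal) (π : S → ℝ) (x : ℕ → S) : Prop :=
  ∃ α : ℝ, 0 ≤ α ∧ ∀ k : ℕ,
    (π (x k) : EReal) ≤ (α : EReal) + (π (x 0) : EReal) + pathWeight A x k

/-- The set `𝒮` of `π`-integrable super-harmonic vectors. -/
def Sset (A : S → S → EReal) (π : S → ℝ) : Set (S → EReal) :=
  {u | (∀ i, u i ≠ ⊤) ∧ (∀ i, (⨆ j, A i j + u j) ≤ u i) ∧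
    (⨆ j, ((π j : EReal) + u j)) < ⊤}

/-- The set `ℋ` of `π`-integrable harmonic vectors. -/
def Hset (A : S → S → EReal) (π : S → ℝ) : Set (S → EReal) :=
  {u | (∀ i, u i ≠ ⊤) ∧ (∀ i, (⨆ j, A i j + u j) = u i) ∧
    (⨆ j, ((π j : EReal) + u j)) < ⊤}

/-- A vector is normalised if `sup_j (π_j + u_j) = 0`. -/
def Normalised (π : S → ℝ) (u : S → EReal) : Prop :=
  (⨆ j, ((π j : EReal) + u j)) = 0

/-- `ξ` is an extremal generator of `V`. -/
def ExtremalGen (V : Set (S → EReal)) (ξ : S → EReal) : Prop :=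
  ξ ∈ V ∧ ξ ≠ (fun _ => (⊥ : EReal)) ∧
    ∀ u v, u ∈ V → v ∈ V → ξ = (fun i => u i ⊔ v i) → ξ = u ∨ ξ = v

end MaxPlus
namespace MaxPlus

/-! ### Auxiliary lemmas -/

section Aux

variable {S : Type*} {A : S → S → EReal} {π : S → ℝ}

/-- Adding a non-`⊤` constant to a supremum, upper-bound form. -/
lemma add_iSup_le' {ι : Sort*} {c y : EReal} (hc : c ≠ ⊤) {f : ι → EReal}
    (h : ∀ i, c + f i ≤ y) : c + ⨆ i, f i ≤ y := by
  induction c with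
  | bot => simp
  | coe c =>
      rw [add_comm, ← EReal.le_sub_iff_add_le (Or.inl (EReal.coe_ne_bot c))
        (Or.inl (EReal.coe_ne_top c))]
      exact iSup_le fun i => (EReal.le_sub_iff_add_le (Or.inl (EReal.coe_ne_bot c))
        (Or.inl (EReal.coe_ne_top c))).2 (by rw [add_comm]; exact h i)
  | top => exact absurd rfl hc

lemma pathWeight_zero (A : S → S → EReal) (p : ℕ → S) : pathWeight A p 0 = 0 := by
  simp [pathWeight]

lemma pathWeight_succ (A : S → S → EReal) (p : ℕ → S) (n : ℕ) :
    pathWeight A p (n + 1) = pathWeight A p n + A (p n) (p (n + 1)) :=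
  Finset.sum_range_succ _ _

lemma pathWeight_le_star (A : S → S → EReal) {p : ℕ → S} {n : ℕ} {i j : S}
    (h : p 0 = i ∧ p n = j) : pathWeight A p n ≤ star A i j :=
  le_iSup_of_le n (le_iSup_of_le p (le_iSup_of_le h le_rfl))

lemma star_self_nonneg (A : S → S → EReal) (i : S) : 0 ≤ star A i i := by
  have := pathWeight_le_star A (p := fun _ => i) (n := 0) (i := i) (j := i) ⟨rfl, rfl⟩
  simpa [pathWeight_zero] using this

lemma pi_add_pathWeight_le (hπ : LeftSuperharmonic A π) (p : ℕ → S) (n : ℕ) :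
    (π (p 0) : EReal) + pathWeight A p n ≤ (π (p n) : EReal) := by
  induction n with
  | zero => simp [pathWeight_zero]
  | succ n ih =>
      rw [pathWeight_succ, ← add_assoc]
      calc (π (p 0) : EReal) + pathWeight A p n + A (p n) (p (n + 1))
          ≤ (π (p n) : EReal) + A (p n) (p (n + 1)) := add_le_add_left ih _
        _ ≤ ⨆ i, ((π i : EReal) + A i (p (n + 1))) := le_iSup_of_le (p n) le_rfl
        _ ≤ (π (p (n + 1)) : EReal) := hπ _

lemma pi_add_star_le (hπ : LeftSuperharmonic A π) (i j : S) :
    (π i : EReal) + star A i j ≤ (π j : EReal) := by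
  refine add_iSup_le' (EReal.coe_ne_top _) fun n =>
    add_iSup_le' (EReal.coe_ne_top _) fun p =>
      add_iSup_le' (EReal.coe_ne_top _) fun h => ?_
  rw [← h.1, ← h.2]
  exact pi_add_pathWeight_le hπ p n

lemma star_self (hπ : LeftSuperharmonic A π) (i : S) : star A i i = 0 := by
  refine le_antisymm ?_ (star_self_nonneg A i)
  by_contra hlt
  push_neg at hlt
  have h1 : (π i : EReal) + 0 < (π i : EReal) + star A i i :=
    EReal.add_lt_add_left_coe hlt (π i)
  rw [add_zero] at h1
  exact absurd (h1.trans_le (pi_add_star_le hπ i i)) (lt_irrefl _)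

lemma add_star_le_star {i k j : S} (hA : A i k ≠ ⊤) :
    A i k + star A k j ≤ star A i j := by
  refine add_iSup_le' hA fun n => add_iSup_le' hA fun p => add_iSup_le' hA fun h => ?_
  set q : ℕ → S := fun m => Nat.rec i (fun m' _ => p m') m with hq
  have hq0 : q 0 = i := rfl
  have hqs : ∀ m, q (m + 1) = p m := fun m => rfl
  have hw : pathWeight A q (n + 1) = pathWeight A p n + A i k := by
    have e1 : A (q 0) (q (0 + 1)) = A i k := by
      have e : q (0 + 1) = p 0 := rfl
      rw [e, hq0, h.1]
    rw [pathWeight, Finset.sum_range_succ', e1]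
    rfl
  calc A i k + pathWeight A p n = pathWeight A q (n + 1) := by rw [hw, add_comm]
    _ ≤ star A i j := pathWeight_le_star A ⟨hq0, by rw [hqs n, h.2]⟩

lemma plus_le_star (A : S → S → EReal) (i j : S) : plus A i j ≤ star A i j :=
  iSup_le fun n => iSup_le fun _ => iSup_le fun p => iSup_le fun h =>
    pathWeight_le_star A h

lemma Kflat_le_K (A : S → S → EReal) (π : S → ℝ) (i j : S) :
    Kflat A π i j ≤ K A π i j :=
  EReal.sub_le_sub (plus_le_star A i j) le_rfl

lemma add_K_le_K {i j : S} (hA : A i j ≠ ⊤) (j' : S) :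
    A i j + K A π j j' ≤ K A π i j' := by
  rw [K, K, sub_eq_add_neg, sub_eq_add_neg, ← add_assoc]
  exact add_le_add_left (add_star_le_star hA) _

lemma pi_add_K_le (hπ : LeftSuperharmonic A π) (j j' : S) :
    (π j : EReal) + K A π j j' ≤ 0 := by
  rw [K, sub_eq_add_neg, ← add_assoc, ← sub_eq_add_neg]
  calc (π j : EReal) + star A j j' - (π j' : EReal)
      ≤ (π j' : EReal) - (π j' : EReal) := EReal.sub_le_sub (pi_add_star_le hπ _ _) le_rfl
    _ = 0 := by rw [← EReal.coe_sub, sub_self, EReal.coe_zero]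

lemma pi_add_le_zero_iff {r : ℝ} {x : EReal} :
    (r : EReal) + x ≤ 0 ↔ x ≤ ((-r : ℝ) : EReal) := by
  rw [add_comm, ← EReal.le_sub_iff_add_le (Or.inl (EReal.coe_ne_bot r))
    (Or.inl (EReal.coe_ne_top r))]
  have : (0 : EReal) - (r : EReal) = ((-r : ℝ) : EReal) := by
    rw [← EReal.coe_zero, ← EReal.coe_sub, zero_sub]
  rw [this]

lemma exists_col_mem {w : S → EReal} (hw : w ∈ martin A π) {W : Set (S → EReal)}
    (hW : W ∈ 𝓝 w) : ∃ j, (fun i => K A π i j) ∈ W := by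
  obtain ⟨v, hvW, hvK⟩ := mem_closure_iff_nhds.1 hw W hW
  obtain ⟨j, hj⟩ := hvK
  exact ⟨j, by rw [show (fun i => K A π i j) = v from hj]; exact hvW⟩

lemma martin_pi_add_le (hπ : LeftSuperharmonic A π) {w : S → EReal}
    (hw : w ∈ martin A π) (j : S) : (π j : EReal) + w j ≤ 0 := by
  rw [pi_add_le_zero_iff]
  by_contra hlt
  push_neg at hlt
  have hWnhds : {v : S → EReal | ((-(π j) : ℝ) : EReal) < v j} ∈ 𝓝 w :=
    (isOpen_lt continuous_const (continuous_apply j)).mem_nhds hlt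
  obtain ⟨j₀, hj₀⟩ := exists_col_mem hw hWnhds
  have h1 : K A π j j₀ ≤ ((-(π j) : ℝ) : EReal) :=
    pi_add_le_zero_iff.1 (pi_add_K_le hπ j j₀)
  exact absurd (hj₀.trans_le h1) (lt_irrefl _)

lemma martin_superharmonic (hA : ∀ i j, A i j ≠ ⊤) {w : S → EReal}
    (hw : w ∈ martin A π) (i j : S) : A i j + w j ≤ w i := by
  by_contra hlt
  push_neg at hlt
  have hAbot : A i j ≠ ⊥ := by
    intro h0
    rw [h0, EReal.bot_add] at hlt
    exact absurd hlt (not_lt.2 bot_le)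
  lift A i j to ℝ using ⟨hA i j, hAbot⟩ with a ha
  obtain ⟨c, hc1, hc2⟩ := EReal.exists_between_coe_real hlt
  have hd : ((c - a : ℝ) : EReal) < w j := by
    rw [EReal.coe_sub, EReal.sub_lt_iff (Or.inl (EReal.coe_ne_bot a))
      (Or.inl (EReal.coe_ne_top a))]
    rw [add_comm] at hc2
    exact hc2
  have hWnhds : ({v : S → EReal | v i < (c : EReal)} ∩
      {v : S → EReal | ((c - a : ℝ) : EReal) < v j}) ∈ 𝓝 w :=
    Filter.inter_mem
      ((isOpen_lt (continuous_apply i) continuous_const).mem_nhds hc1)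
      ((isOpen_lt continuous_const (continuous_apply j)).mem_nhds hd)
  obtain ⟨j₀, hj₀⟩ := exists_col_mem hw hWnhds
  have h1 : (a : EReal) + K A π j j₀ ≤ K A π i j₀ := by
    rw [ha]; exact add_K_le_K (hA i j) j₀
  have h2 : (a : EReal) + ((c - a : ℝ) : EReal) < (a : EReal) + K A π j j₀ :=
    EReal.add_lt_add_left_coe hj₀.2 a
  have h3 : (a : EReal) + ((c - a : ℝ) : EReal) = (c : EReal) := by
    rw [← EReal.coe_add]; norm_num
  rw [h3] at h2
  exact absurd ((h2.trans_le h1).trans hj₀.1) (lt_irrefl _)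

lemma flat_le (hπ : LeftSuperharmonic A π) {w : S → EReal} (hw : w ∈ martin A π)
    (i : S) : flat A π w i ≤ w i := by
  refine iSup_le fun W => iSup_le fun hW => ?_
  by_contra h
  push_neg at h
  obtain ⟨c, hc1, hc2⟩ := EReal.exists_between_coe_real h
  have hWnhds : (W ∩ {v : S → EReal | v i < (c : EReal)}) ∈ 𝓝 w :=
    Filter.inter_mem hW
      ((isOpen_lt (continuous_apply i) continuous_const).mem_nhds hc1)
  obtain ⟨j, hj⟩ := exists_col_mem hw hWnhds
  have h1 : Kflat A π i j ≤ K A π i j := Kflat_le_K A π i j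
  have h2 : (c : EReal) < Kflat A π i j :=
    hc2.trans_le (iInf_le_of_le j (iInf_le_of_le hj.1 le_rfl))
  exact absurd ((h2.trans_le h1).trans hj.2) (lt_irrefl _)

lemma mu_le_bound (u w : S → EReal) :
    mu A π u w ≤ ⨆ j, ((π j : EReal) + u j) := by
  rw [mu]
  refine le_trans (iInf₂_le Set.univ Filter.univ_mem) ?_
  exact iSup₂_le fun j _ => le_iSup (fun j => (π j : EReal) + u j) j

lemma le_mu_self (u : S → EReal) (j : S) :
    (π j : EReal) + u j ≤ mu A π u (fun i => K A π i j) := by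
  rw [mu]
  exact le_iInf₂ fun W hW => le_iSup₂_of_le j (mem_of_mem_nhds hW) le_rfl

lemma mu_mono {u v : S → EReal} (h : ∀ j, u j ≤ v j) (w : S → EReal) :
    mu A π u w ≤ mu A π v w := by
  rw [mu, mu]
  exact iInf₂_mono fun W hW => iSup₂_mono fun j hj => add_le_add_right (h j) _

lemma const_add_mu_le {c : EReal} (hc : c ≠ ⊤) (v w : S → EReal) :
    c + mu A π v w ≤ mu A π (fun j => c + v j) w := by
  rw [mu, mu]
  refine le_iInf fun W => le_iInf fun hW => ?_
  have h1 : (⨅ W, ⨅ _ : W ∈ 𝓝 w, ⨆ j, ⨆ _ : (fun i => K A π i j) ∈ W,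
      ((π j : EReal) + v j)) ≤ ⨆ j, ⨆ _ : (fun i => K A π i j) ∈ W,
      ((π j : EReal) + v j) := iInf₂_le W hW
  refine le_trans (add_le_add_right h1 c) ?_
  refine add_iSup_le' hc fun j => add_iSup_le' hc fun hj => ?_
  exact le_iSup₂_of_le j hj (le_of_eq (add_left_comm c _ _))

lemma superharm_pathWeight {u : S → EReal}
    (hs : ∀ i, (⨆ j, A i j + u j) ≤ u i) (p : ℕ → S) (n : ℕ) :
    pathWeight A p n + u (p n) ≤ u (p 0) := by
  induction n with
  | zero => rw [pathWeight_zero, zero_add]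
  | succ n ih =>
      rw [pathWeight_succ, add_assoc]
      calc pathWeight A p n + (A (p n) (p (n + 1)) + u (p (n + 1)))
          ≤ pathWeight A p n + u (p n) := by
            refine add_le_add_right (le_trans ?_ (hs (p n))) _
            exact le_iSup (fun j' => A (p n) j' + u j') (p (n + 1))
        _ ≤ u (p 0) := ih

lemma superharm_star_add_le {u : S → EReal} (hT : ∀ i, u i ≠ ⊤)
    (hs : ∀ i, (⨆ j, A i j + u j) ≤ u i) (i j : S) :
    u j + star A i j ≤ u i := by
  refine add_iSup_le' (hT j) fun n => add_iSup_le' (hT j) fun p =>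
    add_iSup_le' (hT j) fun h => ?_
  rw [add_comm, ← h.1, ← h.2]
  exact superharm_pathWeight hs p n

lemma pi_u_K_le {u : S → EReal} (hT : ∀ i, u i ≠ ⊤)
    (hs : ∀ i, (⨆ j, A i j + u j) ≤ u i) (i j : S) :
    ((π j : EReal) + u j) + K A π i j ≤ u i := by
  rw [K, sub_eq_add_neg, ← EReal.coe_neg]
  have heq : ((π j : EReal) + u j) + (star A i j + ((-(π j) : ℝ) : EReal))
      = (u j + star A i j) + ((π j : EReal) + ((-(π j) : ℝ) : EReal)) := by
    abel
  have h0 : (π j : EReal) + ((-(π j) : ℝ) : EReal) = 0 := by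
    rw [← EReal.coe_add]; norm_num
  rw [heq, h0, add_zero]
  exact superharm_star_add_le hT hs i j

lemma union_subset_martin {w : S → EReal}
    (hw : w ∈ martinMin A π ∪ kerCols A π) : w ∈ martin A π :=
  hw.elim (fun h => h.1) (fun h => subset_closure h)

end Aux

/-- Martin representation of super-harmonic vectors. For `u ∈ 𝒮`:
(i) `u_i = sup_{w ∈ ℳᵐ ∪ 𝒦} (μ_u(w) + w_i)`;
(ii) `μ_u` is maximal among the maps `ν` representing `u`;
(iii) any representing `ν` is bounded above;
(iv) conversely, any bounded above `ν : ℳᵐ ∪ 𝒦 → ℝ ∪ {−∞}` defines an element of `𝒮`. -/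
theorem martin_representation_superharmonic {S : Type*} (A : S → S → EReal)
    (hA : ∀ i j, A i j ≠ ⊤) (π : S → ℝ) (hπ : LeftSuperharmonic A π)
    (u : S → EReal) (hu : u ∈ Sset A π) :
    (∀ i, u i = ⨆ w ∈ martinMin A π ∪ kerCols A π, (mu A π u w + w i)) ∧
    (∀ ν : (S → EReal) → EReal, (∀ w, ν w ≠ ⊤) →
        (∀ i, u i = ⨆ w ∈ martinMin A π ∪ kerCols A π, (ν w + w i)) →
        ∀ w ∈ martinMin A π ∪ kerCols A π, ν w ≤ mu A π u w) ∧
    (∀ ν : (S → EReal) → EReal, (∀ w, ν w ≠ ⊤) →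
        (∀ i, u i = ⨆ w ∈ martinMin A π ∪ kerCols A π, (ν w + w i)) →
        (⨆ w ∈ martinMin A π ∪ kerCols A π, ν w) < ⊤) ∧
    (∀ ν : (S → EReal) → EReal, (∀ w, ν w ≠ ⊤) →
        (⨆ w ∈ martinMin A π ∪ kerCols A π, ν w) < ⊤ →
        (fun i => ⨆ w ∈ martinMin A π ∪ kerCols A π, (ν w + w i)) ∈ Sset A π) := by
  obtain ⟨huT, hus, hui⟩ := hu
  -- K_{ii} = -π_i
  have hKii : ∀ i, K A π i i = ((-(π i) : ℝ) : EReal) := fun i => by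
    rw [K, star_self hπ, ← EReal.coe_zero, ← EReal.coe_sub, zero_sub]
  -- the key upper bound: μ_u(w) + w_i ≤ u_i for every w in the Martin space
  have hkey : ∀ w ∈ martin A π, ∀ i, mu A π u w + w i ≤ u i := by
    intro w hw i
    by_contra h
    push_neg at h
    have hmu_ne_top : mu A π u w ≠ ⊤ := ((mu_le_bound u w).trans_lt hui).ne
    have hmu_ne_bot : mu A π u w ≠ ⊥ := by
      intro h0
      rw [h0, EReal.bot_add] at h
      exact absurd h (not_lt.2 bot_le)
    lift mu A π u w to ℝ using ⟨hmu_ne_top, hmu_ne_bot⟩ with m hm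
    obtain ⟨c, hc1, hc2⟩ := EReal.exists_between_coe_real h
    have hd : ((c - m : ℝ) : EReal) < w i := by
      rw [EReal.coe_sub, EReal.sub_lt_iff (Or.inl (EReal.coe_ne_bot m))
        (Or.inl (EReal.coe_ne_top m))]
      rw [add_comm] at hc2
      exact hc2
    have hWnhds : {v : S → EReal | ((c - m : ℝ) : EReal) < v i} ∈ 𝓝 w :=
      (isOpen_lt continuous_const (continuous_apply i)).mem_nhds hd
    have hsup : (⨆ j, ⨆ _ : (fun i' => K A π i' j) ∈
        {v : S → EReal | ((c - m : ℝ) : EReal) < v i}, ((π j : EReal) + u j))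
        + ((c - m : ℝ) : EReal) ≤ u i := by
      rw [add_comm]
      refine add_iSup_le' (EReal.coe_ne_top _) fun j =>
        add_iSup_le' (EReal.coe_ne_top _) fun hj => ?_
      calc ((c - m : ℝ) : EReal) + ((π j : EReal) + u j)
          ≤ K A π i j + ((π j : EReal) + u j) := add_le_add_left (le_of_lt hj) _
        _ = ((π j : EReal) + u j) + K A π i j := add_comm _ _
        _ ≤ u i := pi_u_K_le huT hus i j
    have hmle : (m : EReal) ≤ ⨆ j, ⨆ _ : (fun i' => K A π i' j) ∈
        {v : S → EReal | ((c - m : ℝ) : EReal) < v i}, ((π j : EReal) + u j) := by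
      rw [hm, mu]
      exact iInf₂_le _ hWnhds
    have hcle : (c : EReal) ≤ u i := by
      have := (add_le_add_left hmle ((c - m : ℝ) : EReal)).trans hsup
      rwa [← EReal.coe_add, show m + (c - m) = c by ring] at this
    exact absurd hc1 (not_lt.2 hcle)
  -- part (i)
  have hpart1 : ∀ i, u i = ⨆ w ∈ martinMin A π ∪ kerCols A π, (mu A π u w + w i) := by
    intro i
    refine le_antisymm ?_ ?_
    · have hmem : (fun i' => K A π i' i) ∈ martinMin A π ∪ kerCols A π :=
        Or.inr ⟨i, rfl⟩
      have heq : u i = ((π i : EReal) + u i) + K A π i i := by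
        rw [hKii i, EReal.coe_neg, ← sub_eq_add_neg, add_comm ((π i : EReal)) (u i),
          EReal.add_sub_cancel_right]
      calc u i = ((π i : EReal) + u i) + K A π i i := heq
        _ ≤ mu A π u (fun i' => K A π i' i) + K A π i i :=
            add_le_add_left (le_mu_self u i) _
        _ ≤ ⨆ w ∈ martinMin A π ∪ kerCols A π, (mu A π u w + w i) :=
            le_iSup₂_of_le _ hmem le_rfl
    · exact iSup₂_le fun w hw => hkey w (union_subset_martin hw) i
  -- H(w,w) ≥ 0 on the union
  have hH : ∀ w ∈ martinMin A π ∪ kerCols A π, (0 : EReal) ≤ mu A π w w := by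
    intro w hw
    rcases hw with hw | hw
    · calc (0 : EReal) = Hflat A π w w := hw.2.symm
        _ = mu A π (flat A π w) w := rfl
        _ ≤ mu A π w w := mu_mono (flat_le hπ hw.1) w
    · obtain ⟨j, rfl⟩ := hw
      have := le_mu_self (A := A) (π := π) (fun i => K A π i j) j
      have h0 : (π j : EReal) + K A π j j = 0 := by
        rw [hKii j, ← EReal.coe_add]; norm_num
      rwa [h0] at this
  -- part (ii)
  have hpart2 : ∀ ν : (S → EReal) → EReal, (∀ w, ν w ≠ ⊤) →
      (∀ i, u i = ⨆ w ∈ martinMin A π ∪ kerCols A π, (ν w + w i)) →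
      ∀ w ∈ martinMin A π ∪ kerCols A π, ν w ≤ mu A π u w := by
    intro ν hνT hνr w hw
    have hterm : ∀ j, ν w + w j ≤ u j := fun j => by
      rw [hνr j]
      exact le_iSup₂_of_le w hw le_rfl
    calc ν w = ν w + 0 := (add_zero _).symm
      _ ≤ ν w + mu A π w w := add_le_add_right (hH w hw) _
      _ ≤ mu A π (fun j => ν w + w j) w := const_add_mu_le (hνT w) w w
      _ ≤ mu A π u w := mu_mono hterm w
  refine ⟨hpart1, hpart2, ?_, ?_⟩
  -- part (iii)
  · intro ν hνT hνr
    have : (⨆ w ∈ martinMin A π ∪ kerCols A π, ν w)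
        ≤ ⨆ j, ((π j : EReal) + u j) :=
      iSup₂_le fun w hw => (hpart2 ν hνT hνr w hw).trans (mu_le_bound u w)
    exact this.trans_lt hui
  -- part (iv)
  · intro ν hνT hνbdd
    have hwle : ∀ w ∈ martinMin A π ∪ kerCols A π, ∀ j,
        w j ≤ ((-(π j) : ℝ) : EReal) := fun w hw j =>
      pi_add_le_zero_iff.1 (martin_pi_add_le hπ (union_subset_martin hw) j)
    have hνtot : (⨆ w ∈ martinMin A π ∪ kerCols A π, ν w) ≠ ⊤ := hνbdd.ne
    refine ⟨?_, ?_, ?_⟩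
    · -- no coordinate is ⊤
      intro i
      have : (⨆ w ∈ martinMin A π ∪ kerCols A π, (ν w + w i))
          ≤ (⨆ w ∈ martinMin A π ∪ kerCols A π, ν w) + ((-(π i) : ℝ) : EReal) := by
        refine iSup₂_le fun w hw => ?_
        have hb : ν w ≤ ⨆ w' ∈ martinMin A π ∪ kerCols A π, ν w' :=
          le_iSup₂_of_le w hw le_rfl
        exact (add_le_add_right (hwle w hw i) (ν w)).trans (add_le_add_left hb _)
      exact (this.trans_lt (EReal.add_lt_top hνtot (EReal.coe_ne_top _))).ne
    · -- superharmonicity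
      intro i
      refine iSup_le fun j => ?_
      refine add_iSup_le' (hA i j) fun w => add_iSup_le' (hA i j) fun hw => ?_
      calc A i j + (ν w + w j) = ν w + (A i j + w j) := add_left_comm _ _ _
        _ ≤ ν w + w i :=
            add_le_add_right (martin_superharmonic hA (union_subset_martin hw) i j) _
        _ ≤ ⨆ w' ∈ martinMin A π ∪ kerCols A π, (ν w' + w' i) :=
            le_iSup₂_of_le w hw le_rfl
    · -- integrability
      refine lt_of_le_of_lt ?_ hνbdd
      refine iSup_le fun j => ?_
      refine add_iSup_le' (EReal.coe_ne_top _) fun w =>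
        add_iSup_le' (EReal.coe_ne_top _) fun hw => ?_
      calc (π j : EReal) + (ν w + w j) = ν w + ((π j : EReal) + w j) :=
            add_left_comm _ _ _
        _ ≤ ν w + 0 :=
            add_le_add_right (martin_pi_add_le hπ (union_subset_martin hw) j) _
        _ = ν w := add_zero _
        _ ≤ ⨆ w' ∈ martinMin A π ∪ kerCols A π, ν w' := le_iSup₂_of_le w hw le_rfl

end MaxPlus
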